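/- Let q ≡ 1 (mod 4) be a prime power and a ∈ 𝔽_q such that both a and a+1 are non-squares in 𝔽_q. Then the two polynomials f(X) = (X − a)² + a and g(X) = (X − a − 1)² + a form a dynamically-irreducible set over 𝔽_q: every composition of f's and g's is irreducible. -/

import Mathlib

open Polynomial

private lemma geom_sum_nat (q n : ℕ) (h : 1 ≤ q) :
    (∑ i ∈ Finset.range n, q ^ i) * (q - 1) = q ^ n - 1 := by
  induction n with
  | zero => simp
  | succ n ih =>
    rw [Finset.sum_range_succ, add_mul, ih, pow_succ, Nat.mul_sub]
    have h1 : 1 ≤ q ^ n := Nat.one_le_pow _ _ h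
    have h2 : q ^ n ≤ q ^ n * q := Nat.le_mul_of_pos_right _ h
    omega

/-- Key lemma: if `L/K` is an extension of finite fields with a power basis whose generator has
minimal polynomial `Q` with `Q(a)` a nonsquare in `K`, and the degree is even, and
`#K ≡ 1 mod 4`, then `gen - a` is a nonsquare in `L`. -/
private lemma key_nonsquare {K : Type*} [Field K] [Fintype K] {L : Type*} [Field L]
    [Algebra K L] [Fintype L] (hq4 : Fintype.card K % 4 = 1) (pb : PowerBasis K L) (a : K)
    (hQa : ¬ IsSquare ((minpoly K pb.gen).eval a)) (heven : Even pb.dim) (hpos : 0 < pb.dim) :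
    ¬ IsSquare (pb.gen - algebraMap K L a) := by
  classical
  set q := Fintype.card K with hqdef
  set n := pb.dim with hndef
  set Q := minpoly K pb.gen with hQdef
  have hq1 : 1 < q := Fintype.one_lt_card
  have hchar2 : ringChar K ≠ 2 := by
    rw [Ne, FiniteField.even_card_iff_char_two]; omega
  obtain ⟨p, hp⟩ := CharP.exists K
  haveI : CharP K p := hp
  haveI hpf : Fact p.Prime := ⟨CharP.char_is_prime K p⟩
  obtain ⟨k, -, hk⟩ := FiniteField.card K p
  haveI : CharP L p := charP_of_injective_algebraMap (algebraMap K L).injective p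
  have hqpow : ∀ d : ℕ, q ^ d = p ^ ((k : ℕ) * d) := fun d => by
    rw [← hqdef] at hk; rw [hk, ← pow_mul]
  have hpowK : ∀ (r : K) (d : ℕ), r ^ q ^ d = r := fun r d => by
    rw [hqdef]; exact FiniteField.pow_card_pow d r
  -- the `q^d`-power Frobenius as a `K`-algebra endomorphism of `L`
  let φ : ℕ → (L →ₐ[K] L) := fun d =>
    { toRingHom := iterateFrobenius L p ((k : ℕ) * d)
      commutes' := fun r => by
        show iterateFrobenius L p ((k : ℕ) * d) (algebraMap K L r) = algebraMap K L r
        rw [iterateFrobenius_def, ← hqpow d, ← map_pow, hpowK] }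
  have hφ : ∀ d (z : L), φ d z = z ^ q ^ d := fun d z => by
    show iterateFrobenius L p ((k : ℕ) * d) z = _
    rw [iterateFrobenius_def, hqpow d]
  have hQint : IsIntegral K pb.gen := pb.isIntegral_gen
  have hQmonic : Q.Monic := minpoly.monic hQint
  have hQdeg : Q.natDegree = n := pb.natDegree_minpoly
  have hcardL : Fintype.card L = q ^ n := by
    rw [Module.card_eq_pow_finrank (K := K), pb.finrank]
  -- each `gen ^ (q ^ i)` is a root of `Q`
  have hroot : ∀ i : ℕ, (aeval (pb.gen ^ q ^ i)) Q = 0 := fun i => by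
    have h1 := aeval_algHom_apply (φ i) pb.gen Q
    rw [hQdef, minpoly.aeval, map_zero, hφ] at h1
    exact h1
  -- the roots `gen ^ (q ^ i)`, `i < n`, are pairwise distinct
  have hinj : ∀ i ∈ Finset.range n, ∀ j ∈ Finset.range n,
      pb.gen ^ q ^ i = pb.gen ^ q ^ j → i = j := by
    suffices H : ∀ i j, i < j → j < n → pb.gen ^ q ^ i ≠ pb.gen ^ q ^ j by
      intro i hi j hj hij
      rw [Finset.mem_range] at hi hj
      rcases lt_trichotomy i j with hlt | heq | hgt
      · exact absurd hij (H i j hlt hj)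
      · exact heq
      · exact absurd hij.symm (H j i hgt hi)
    intro i j hij hj hEq
    set d := i + (n - j) with hddef
    have hd0 : d ≠ 0 := by omega
    have hdn : d < n := by omega
    have hgen_d : pb.gen ^ q ^ d = pb.gen := by
      have e1 : (pb.gen ^ q ^ j) ^ q ^ (n - j) = pb.gen := by
        rw [← pow_mul, ← pow_add, Nat.add_sub_cancel' hj.le, ← hcardL, FiniteField.pow_card]
      have e2 : (pb.gen ^ q ^ i) ^ q ^ (n - j) = pb.gen ^ q ^ d := by
        rw [← pow_mul, ← pow_add]
      rw [← e2, hEq, e1]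
    have hall : ∀ z : L, z ^ q ^ d = z := by
      have hEq2 : φ d = AlgHom.id K L := pb.algHom_ext (by rw [hφ]; simpa using hgen_d)
      intro z
      have := DFunLike.congr_fun hEq2 z
      rwa [hφ, AlgHom.id_apply] at this
    -- every element of `L` is a root of `X ^ q ^ d - X`, contradiction with card
    set P : L[X] := X ^ q ^ d - X with hPdef
    have hPdeg : P.natDegree = q ^ d := by
      rw [hPdef, hqpow d]
      exact FiniteField.X_pow_card_pow_sub_X_natDegree_eq L
        (Nat.mul_ne_zero k.pos.ne' hd0) hpf.out.one_lt
    have hPne : P ≠ 0 := by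
      intro h0
      rw [h0, natDegree_zero] at hPdeg
      have : 0 < q ^ d := pow_pos (by omega) d
      omega
    have hle : Fintype.card L ≤ q ^ d := by
      have hsub : (Finset.univ : Finset L) ⊆ P.roots.toFinset := by
        intro z _
        rw [Multiset.mem_toFinset, mem_roots hPne]
        show P.eval z = 0
        simp [hPdef, hall z]
      calc Fintype.card L = (Finset.univ : Finset L).card := rfl
        _ ≤ P.roots.toFinset.card := Finset.card_le_card hsub
        _ ≤ Multiset.card P.roots := Multiset.toFinset_card_le _
        _ ≤ P.natDegree := card_roots' P
        _ = q ^ d := hPdeg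
    rw [hcardL] at hle
    exact absurd hle (not_le.mpr (Nat.pow_lt_pow_right hq1 hdn))
  -- `Q` splits over `L` with roots exactly the `gen ^ (q ^ i)`
  set QL : L[X] := Q.map (algebraMap K L) with hQLdef
  have hQLmonic : QL.Monic := hQmonic.map _
  have hQLdeg : QL.natDegree = n := by rw [hQLdef, natDegree_map, hQdeg]
  have hQLne : QL ≠ 0 := hQLmonic.ne_zero
  set M : Multiset L := (Finset.range n).val.map (fun i => pb.gen ^ q ^ i) with hMdef
  have hMnodup : M.Nodup :=
    Multiset.Nodup.map_on (fun i hi j hj hEq => hinj i hi j hj hEq) (Finset.range n).nodup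
  have hMcard : Multiset.card M = n := by simp [hMdef]
  have hMle : M ≤ QL.roots := by
    rw [Multiset.le_iff_subset hMnodup]
    intro z hz
    rw [hMdef, Multiset.mem_map] at hz
    obtain ⟨i, -, rfl⟩ := hz
    rw [mem_roots hQLne]
    show QL.eval _ = 0
    rw [hQLdef, eval_map_algebraMap, hroot i]
  have hroots : QL.roots = M :=
    (Multiset.eq_of_le_of_card_le hMle (by rw [hMcard, ← hQLdeg]; exact card_roots' QL)).symm
  have hsplit : Splits QL :=
    splits_iff_card_roots.mpr (by rw [hroots, hMcard, hQLdeg])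
  -- evaluate at `a`
  set w : L := algebraMap K L a - pb.gen with hwdef
  set s : ℕ := ∑ i ∈ Finset.range n, q ^ i with hsdef
  have heval : algebraMap K L (Q.eval a) = w ^ s := by
    have h1 : QL.eval (algebraMap K L a) = algebraMap K L (Q.eval a) := by
      rw [hQLdef, eval_map, eval₂_at_apply]
    have h2 : QL = ∏ i ∈ Finset.range n, (X - C (pb.gen ^ q ^ i)) := by
      conv_lhs => rw [hsplit.eq_prod_roots_of_monic hQLmonic, hroots]
      rw [hMdef, Multiset.map_map, Finset.prod_eq_multiset_prod]
      simp [Function.comp_def]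
    rw [← h1, h2, eval_prod]
    have hcongr : ∀ i ∈ Finset.range n,
        eval (algebraMap K L a) (X - C (pb.gen ^ q ^ i)) = w ^ q ^ i := by
      intro i _
      rw [eval_sub, eval_X, eval_C, hwdef, hqpow i, sub_pow_char_pow, ← hqpow i, ← map_pow,
        hpowK]
    rw [Finset.prod_congr rfl hcongr, Finset.prod_pow_eq_pow_sum]
  -- now suppose `gen - a` were a square
  rintro ⟨z, hz⟩
  have hQa0 : Q.eval a ≠ 0 := fun h0 => hQa (h0 ▸ ⟨0, by ring⟩)
  have hwz : w = -(z * z) := by rw [hwdef, ← hz]; ring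
  have hw0 : w ≠ 0 := by
    intro h0
    apply hQa0
    have hs0 : s ≠ 0 := by
      have : 0 < s := by
        rw [hsdef]
        exact Finset.sum_pos (fun i _ => Nat.pow_pos (by omega))
          ⟨0, Finset.mem_range.mpr hpos⟩
      omega
    have := heval
    rw [h0, zero_pow hs0] at this
    exact (algebraMap K L).injective (by rw [this, map_zero])
  have hz0 : z ≠ 0 := by intro h0; apply hw0; rw [hwz, h0]; ring
  -- exponent arithmetic
  have hgeom : s * (q - 1) = q ^ n - 1 := geom_sum_nat q n (by omega)
  have hq2 : 2 ∣ q - 1 := by omega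
  have hexp : s * ((q - 1) / 2) = (q ^ n - 1) / 2 := by
    rw [← Nat.mul_div_assoc s hq2, hgeom]
  have hm4 : q ^ n % 4 = 1 := by
    rw [Nat.pow_mod, hq4, one_pow]
    norm_num
  have hqn1 : 1 ≤ q ^ n := Nat.one_le_pow _ _ (by omega)
  have heven2 : Even ((q ^ n - 1) / 2) := by
    have h4 : 4 ∣ q ^ n - 1 := by omega
    obtain ⟨m, hm⟩ := h4
    exact ⟨m, by omega⟩
  have htwo : 2 * ((q ^ n - 1) / 2) = q ^ n - 1 := by omega
  -- conclude `Q.eval a` is a square, contradiction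
  apply hQa
  rw [FiniteField.isSquare_iff hchar2 hQa0]
  have hhalf : q / 2 = (q - 1) / 2 := by omega
  rw [← hqdef, hhalf]
  apply (algebraMap K L).injective
  rw [map_pow, heval, ← pow_mul, hexp, map_one, hwz, neg_pow, Even.neg_one_pow heven2,
    one_mul, ← pow_two, ← pow_mul, htwo, ← hcardL,
    FiniteField.pow_card_sub_one_eq_one z hz0]

private lemma quad_monic {F : Type*} [Field F] (b c : F) : ((X - C b) ^ 2 + C c).Monic :=
  ((monic_X_sub_C b).pow 2).add_of_left
    (by rw [degree_pow, degree_X_sub_C]; exact lt_of_le_of_lt (degree_C_le) (by norm_num))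

private lemma quad_natDegree {F : Type*} [Field F] (b c : F) :
    ((X - C b) ^ 2 + C c).natDegree = 2 := by
  have h : ((X - C b) ^ 2 + C c).degree = 2 := by
    rw [degree_add_eq_left_of_degree_lt, degree_pow, degree_X_sub_C]
    · norm_num
    · rw [degree_pow, degree_X_sub_C]
      exact lt_of_le_of_lt (degree_C_le) (by norm_num)
  exact natDegree_eq_of_degree_eq_some h

/-- A quadratic `(X - b)^2 - c` with `c` a nonsquare is irreducible. -/
private lemma quad_irreducible {F : Type*} [Field F] (b c : F) (hc : ¬ IsSquare c) :
    Irreducible ((X - C b) ^ 2 - C c) := by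
  have hmain : (X - C b) ^ 2 - C c = (X - C b) ^ 2 + C (-c) := by rw [map_neg]; ring
  rw [hmain]
  rw [(quad_monic b (-c)).irreducible_iff_roots_eq_zero_of_degree_le_three
    (by rw [quad_natDegree]) (by rw [quad_natDegree]; norm_num)]
  rw [Multiset.eq_zero_iff_forall_notMem]
  intro r hr
  rw [mem_roots (quad_monic b (-c)).ne_zero] at hr
  apply hc
  have : (r - b) ^ 2 = c := by
    have := hr
    simp only [IsRoot, eval_add, eval_pow, eval_sub, eval_X, eval_C] at this
    linear_combination this
  exact ⟨r - b, by rw [← this]; ring⟩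

private lemma foldr_append_comp {F : Type*} [Field F] (l : List F[X]) (h : F[X]) :
    ((l ++ [h]).foldr (fun u v => u.comp v) X) = (l.foldr (fun u v => u.comp v) X).comp h := by
  induction l with
  | nil => simp
  | cons g t ih => simp only [List.cons_append, List.foldr_cons, ih, comp_assoc]

set_option maxHeartbeats 1000000

theorem pair_dyn_irr_of_nonsquares (F : Type*) [Field F] [Fintype F]
    (hq : Fintype.card F % 4 = 1)
    (a : F) (ha : ¬ IsSquare a) (ha1 : ¬ IsSquare (a + 1)) :
    ∀ l : List F[X], l ≠ [] →
      (∀ g ∈ l, g = (X - C a) ^ 2 + C a ∨ g = (X - C (a + 1)) ^ 2 + C a) →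
      Irreducible (l.foldr (fun u v => u.comp v) X) := by
  have hq1 : 1 < Fintype.card F := Fintype.one_lt_card
  -- evaluation of a composition at `a` or `a + 1` stays in `{a, a+1}`
  have hevalmem : ∀ l : List F[X],
      (∀ g ∈ l, g = (X - C a) ^ 2 + C a ∨ g = (X - C (a + 1)) ^ 2 + C a) →
      ∀ c : F, (c = a ∨ c = a + 1) →
      ((l.foldr (fun u v => u.comp v) X).eval c = a ∨
        (l.foldr (fun u v => u.comp v) X).eval c = a + 1) := by
    intro l
    induction l with
    | nil => intro _ c hc; simpa using hc
    | cons h t ih =>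
      intro hmem c hc
      have ht := ih (fun g hg => hmem g (List.mem_cons_of_mem _ hg)) c hc
      have hh := hmem h List.mem_cons_self
      rw [List.foldr_cons, eval_comp]
      set v := (t.foldr (fun u v => u.comp v) X).eval c with hv
      rcases hh with rfl | rfl <;> rcases ht with hv' | hv' <;> rw [hv'] <;>
        simp only [eval_add, eval_pow, eval_sub, eval_X, eval_C] <;> [left; right; right; left] <;>
        ring
  -- monicity and degree of compositions
  have hmonicdeg : ∀ l : List F[X],
      (∀ g ∈ l, g = (X - C a) ^ 2 + C a ∨ g = (X - C (a + 1)) ^ 2 + C a) →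
      (l.foldr (fun u v => u.comp v) X).Monic ∧
        (l.foldr (fun u v => u.comp v) X).natDegree = 2 ^ l.length := by
    intro l
    induction l with
    | nil => intro _; exact ⟨monic_X, by simp⟩
    | cons h t ih =>
      intro hmem
      obtain ⟨hm, hd⟩ := ih (fun g hg => hmem g (List.mem_cons_of_mem _ hg))
      have hh := hmem h List.mem_cons_self
      have hhm : h.Monic := by rcases hh with rfl | rfl <;> exact quad_monic _ _
      have hhd : h.natDegree = 2 := by rcases hh with rfl | rfl <;> exact quad_natDegree _ _
      have hne : (t.foldr (fun u v => u.comp v) X).natDegree ≠ 0 := by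
        rw [hd]; positivity
      constructor
      · rw [List.foldr_cons]; exact hhm.comp hm hne
      · rw [List.foldr_cons, natDegree_comp, hhd, hd, List.length_cons, pow_succ, mul_comm]
  intro l
  induction l using List.reverseRecOn with
  | nil => intro h; exact absurd rfl h
  | append_singleton l' h ih =>
    intro _ hmem
    have hh := hmem h (by simp)
    have hhb : ∃ b : F, (b = a ∨ b = a + 1) ∧ h = (X - C b) ^ 2 + C a := by
      rcases hh with rfl | rfl
      exacts [⟨a, Or.inl rfl, rfl⟩, ⟨a + 1, Or.inr rfl, rfl⟩]
    obtain ⟨b, hb, rfl⟩ := hhb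
    rw [foldr_append_comp]
    rcases eq_or_ne l' [] with rfl | hl'
    · rw [List.foldr_nil, X_comp]
      -- a single quadratic: irreducible since `-a` is a nonsquare
      have hnsq : ¬ IsSquare (-a) := by
        intro hsq
        apply ha
        have hm1 : IsSquare (-1 : F) := FiniteField.isSquare_neg_one_iff.mpr (by omega)
        have := hm1.mul hsq
        rwa [neg_one_mul, neg_neg] at this
      have := quad_irreducible b (-a) hnsq
      rwa [map_neg, sub_neg_eq_add] at this
    · -- inductive step: composition with an irreducible polynomial
      have hmem' : ∀ g ∈ l', g = (X - C a) ^ 2 + C a ∨ g = (X - C (a + 1)) ^ 2 + C a :=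
        fun g hg => hmem g (by simp [hg])
      have hQirr := ih hl' hmem'
      obtain ⟨hQmonic, hQdeg⟩ := hmonicdeg l' hmem'
      set Q : F[X] := l'.foldr (fun u v => u.comp v) X with hQdef
      have hlen : 1 ≤ l'.length := by
        cases l' with
        | nil => exact absurd rfl hl'
        | cons _ _ => simp
      apply Polynomial.irreducible_comp hQmonic (quad_monic b a) hQirr
      intro E _ _ x hx
      have hint : IsIntegral F x := by
        by_contra hc
        rw [minpoly.eq_zero hc] at hx
        exact hQmonic.ne_zero hx.symm
      haveI := IntermediateField.adjoin.finiteDimensional hint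
      haveI : Finite (IntermediateField.adjoin F {x}) := Module.finite_of_finite F
      letI : Fintype (IntermediateField.adjoin F {x}) := Fintype.ofFinite _
      set pb := IntermediateField.adjoin.powerBasis hint with hpbdef
      have hgen : pb.gen = IntermediateField.AdjoinSimple.gen F x :=
        IntermediateField.adjoin.powerBasis_gen hint
      have hminpoly : minpoly F pb.gen = Q := by
        rw [hgen, IntermediateField.minpoly_gen, hx]
      have hdim : pb.dim = 2 ^ l'.length := by
        rw [← pb.natDegree_minpoly, hminpoly, hQdeg]
      have hkey : ¬ IsSquare (pb.gen - algebraMap F _ a) := by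
        apply key_nonsquare hq pb a _ _ _
        · rw [hminpoly]
          rcases hevalmem l' hmem' a (Or.inl rfl) with hv | hv <;> rw [hv]
          exacts [ha, ha1]
        · rw [hdim]
          obtain ⟨m, hm⟩ : ∃ m, l'.length = m + 1 := ⟨l'.length - 1, by omega⟩
          exact ⟨2 ^ m, by rw [hm, pow_succ]; ring⟩
        · rw [hdim]; positivity
      -- rewrite the quadratic and conclude
      set Lx := IntermediateField.adjoin F {x}
      set gen := IntermediateField.AdjoinSimple.gen F x with hgendef
      have hquad : Polynomial.map (algebraMap F Lx) ((X - C b) ^ 2 + C a) - C gen =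
          (X - C (algebraMap F Lx b)) ^ 2 - C (gen - algebraMap F Lx a) := by
        rw [Polynomial.map_add, Polynomial.map_pow, Polynomial.map_sub, map_X, map_C, map_C,
          C_sub]
        abel
      rw [hquad]
      apply quad_irreducible
      rw [← hgen]
      exact hkey
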